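/- Let E be a nonzero c-semistable object of 𝒜 with v(cl E) = 1, and assume the set {cl F : F a subobject of E} ⊆ Γ is finite. Let E′ be a subobject of E with E′ ≠ E such that, for all sufficiently small ε > 0, the chain 0 ⊆ E′ ⊆ E is the (c−ε)-HN filtration of E (that is: either E′ = 0 and E is (c−ε)-semistable, or E′ ≠ 0, both E′ and E/E′ are (c−ε)-semistable, and μ_{c−ε}(E′) > μ_{c−ε}(E/E′)). If E is c⁺-stable, then the quotient E/E′ is c-stable. -/
import Mathlib


open CategoryTheory CategoryTheory.Limits

/-- Cross-multiplied comparison `μ_c(x) ≤ μ_c(y)` of the slopes `μ_c = (d + c·v)/r`. -/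
def slopeLE {Γ : Type*} [AddCommGroup Γ] (d r : Γ →+ ℝ) (v : Γ →+ ℤ) (c : ℝ)
    (x y : Γ) : Prop :=
  (d x + c * (v x : ℝ)) * r y ≤ (d y + c * (v y : ℝ)) * r x

/-- Cross-multiplied comparison `μ_c(x) < μ_c(y)` of the slopes `μ_c = (d + c·v)/r`. -/
def slopeLT {Γ : Type*} [AddCommGroup Γ] (d r : Γ →+ ℝ) (v : Γ →+ ℤ) (c : ℝ)
    (x y : Γ) : Prop :=
  (d x + c * (v x : ℝ)) * r y < (d y + c * (v y : ℝ)) * r x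

/-- A nonzero object `E` is `c`-semistable if `μ_c(F) ≤ μ_c(E)` for every subobject
`F ⊆ E` with `F ≠ 0`, `F ≠ E`. -/
def IsSemistableAt {C : Type*} [Category C] [Abelian C] {Γ : Type*} [AddCommGroup Γ]
    (cl : C → Γ) (d r : Γ →+ ℝ) (v : Γ →+ ℤ) (c : ℝ) (E : C) : Prop :=
  ∀ (F : C) (f : F ⟶ E), Mono f → ¬ IsZero F → ¬ IsIso f →
    slopeLE d r v c (cl F) (cl E)

/-- A nonzero object `E` is `c`-stable if `μ_c(F) < μ_c(E)` for every subobject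
`F ⊆ E` with `F ≠ 0`, `F ≠ E`. -/
def IsStableAt {C : Type*} [Category C] [Abelian C] {Γ : Type*} [AddCommGroup Γ]
    (cl : C → Γ) (d r : Γ →+ ℝ) (v : Γ →+ ℤ) (c : ℝ) (E : C) : Prop :=
  ∀ (F : C) (f : F ⟶ E), Mono f → ¬ IsZero F → ¬ IsIso f →
    slopeLT d r v c (cl F) (cl E)

/-- `E` is `c⁺`-stable if it is `(c+ε)`-stable for all sufficiently small `ε > 0`. -/
def IsPlusStableAt {C : Type*} [Category C] [Abelian C] {Γ : Type*} [AddCommGroup Γ]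
    (cl : C → Γ) (d r : Γ →+ ℝ) (v : Γ →+ ℤ) (c : ℝ) (E : C) : Prop :=
  ∃ δ > (0 : ℝ), ∀ ε : ℝ, 0 < ε → ε < δ → IsStableAt cl d r v (c + ε) E

/-- `E` is `c⁻`-stable if it is `(c−ε)`-stable for all sufficiently small `ε > 0`. -/
def IsMinusStableAt {C : Type*} [Category C] [Abelian C] {Γ : Type*} [AddCommGroup Γ]
    (cl : C → Γ) (d r : Γ →+ ℝ) (v : Γ →+ ℤ) (c : ℝ) (E : C) : Prop :=
  ∃ δ > (0 : ℝ), ∀ ε : ℝ, 0 < ε → ε < δ → IsStableAt cl d r v (c - ε) E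

/-- Let `E` be a nonzero `c`-semistable object with `v(cl E) = 1` and let `E' ⊊ E` be such
that `0 ⊆ E' ⊆ E` is the `(c−ε)`-HN filtration of `E` for all small `ε > 0`. If `E` is
`c⁺`-stable then the quotient `E/E'` is `c`-stable. -/
lemma aux_nonpos' {δ A B : ℝ} (hδ : 0 < δ)
    (h : ∀ ε : ℝ, 0 < ε → ε < δ → A + ε * B ≤ 0) : A ≤ 0 := by
  by_contra h'
  push_neg at h'
  have hB1 : (0:ℝ) < |B| + 1 := by positivity
  set ε := min (δ/2) (A/(|B|+1)) with hεdef
  have h1 : 0 < ε := lt_min (by linarith) (div_pos h' hB1)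
  have h2 : ε < δ := lt_of_le_of_lt (min_le_left _ _) (by linarith)
  have h3 := h ε h1 h2
  have h4 : ε ≤ A/(|B|+1) := min_le_right _ _
  have h5 : ε * (-|B|) ≤ ε * B := mul_le_mul_of_nonneg_left (neg_abs_le B) h1.le
  have h6 : ε * |B| < A := by
    have hm := mul_le_mul_of_nonneg_right h4 (abs_nonneg B)
    have hc : A/(|B|+1) * (|B|+1) = A := div_mul_cancel₀ _ (ne_of_gt hB1)
    nlinarith [div_pos h' hB1]
  nlinarith


set_option maxHeartbeats 1000000 in
theorem stmt_7 {C : Type*} [Category C] [Abelian C] {Γ : Type*} [AddCommGroup Γ]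
    (cl : C → Γ) (d r : Γ →+ ℝ) (v : Γ →+ ℤ)
    (hcl0 : ∀ X : C, IsZero X → cl X = 0)
    (hses : ∀ S : ShortComplex C, S.ShortExact → cl S.X₂ = cl S.X₁ + cl S.X₃)
    (hpos : ∀ X : C, ¬ IsZero X →
      0 ≤ r (cl X) ∧ 0 ≤ v (cl X) ∧ (r (cl X) = 0 → 0 < d (cl X) ∧ v (cl X) = 0))
    (E : C) (hE : ¬ IsZero E) (hvE : v (cl E) = 1) (c : ℝ)
    (hsst : IsSemistableAt cl d r v c E)
    (hfin : {g : Γ | ∃ (F : C) (f : F ⟶ E), Mono f ∧ cl F = g}.Finite)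
    (E' : C) (f : E' ⟶ E) (hf : Mono f) (hne : ¬ IsIso f)
    (hHN : ∃ δ > (0 : ℝ), ∀ ε : ℝ, 0 < ε → ε < δ →
      ((IsZero E' ∧ IsSemistableAt cl d r v (c - ε) E) ∨
       (¬ IsZero E' ∧ IsSemistableAt cl d r v (c - ε) E' ∧
         IsSemistableAt cl d r v (c - ε) (cokernel f) ∧
         slopeLT d r v (c - ε) (cl (cokernel f)) (cl E'))))
    (hplus : IsPlusStableAt cl d r v c E) :
    IsStableAt cl d r v c (cokernel f) := by
  classical
  haveI := hf
  intro F g hg hF hgiso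
  haveI := hg
  obtain ⟨δ₁, hδ₁, hH⟩ := hHN
  obtain ⟨δ₂, hδ₂, hP⟩ := hplus
  have clcoker : ∀ (X Y : C) (u : X ⟶ Y), Mono u → cl Y = cl X + cl (cokernel u) := by
    intro X Y u hu
    exact hses (ShortComplex.mk u (cokernel.π u) (cokernel.condition u))
      (ShortComplex.ShortExact.mk' (ShortComplex.exact_cokernel u) hu inferInstance)
  set ε₀ : ℝ := min δ₁ δ₂ / 2 with hε₀def
  have hmin : 0 < min δ₁ δ₂ := lt_min hδ₁ hδ₂
  have hε₀pos : 0 < ε₀ := by rw [hε₀def]; linarith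
  have hε₀1 : ε₀ < δ₁ := by
    have := min_le_left δ₁ δ₂; rw [hε₀def]; linarith
  have hε₀2 : ε₀ < δ₂ := by
    have := min_le_right δ₁ δ₂; rw [hε₀def]; linarith
  by_cases hz : IsZero E'
  · -- E' is zero: cokernel f ≅ E
    have hf0 : f = 0 := hz.eq_zero_of_src f
    have hcomp : f ≫ 𝟙 E = 0 := by rw [hf0, zero_comp]
    have hπφ : cokernel.π f ≫ cokernel.desc f (𝟙 E) hcomp = 𝟙 E := cokernel.π_desc _ _ _
    set φ : cokernel f ⟶ E := cokernel.desc f (𝟙 E) hcomp with hφdef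
    have hφπ : φ ≫ cokernel.π f = 𝟙 (cokernel f) := by
      rw [← cancel_epi (cokernel.π f), ← Category.assoc, hπφ, Category.id_comp, Category.comp_id]
    haveI hisoφ : IsIso φ := ⟨⟨cokernel.π f, hφπ, hπφ⟩⟩
    haveI hmono' : Mono (g ≫ φ) := mono_comp g φ
    have hne' : ¬ IsIso (g ≫ φ) := by
      intro hi
      apply hgiso
      have heq : (g ≫ φ) ≫ cokernel.π f = g := by
        rw [Category.assoc, hφπ, Category.comp_id]
      haveI := hi
      haveI : IsIso (cokernel.π f) := ⟨⟨φ, hπφ, hφπ⟩⟩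
      rw [← heq]
      infer_instance
    have hclQ : cl (cokernel f) = cl E := by
      have h' := clcoker E' E f hf
      rw [hcl0 E' hz, zero_add] at h'
      exact h'.symm
    have hup := hP ε₀ hε₀pos hε₀2 F (g ≫ φ) hmono' hF hne'
    have hdn : slopeLE d r v (c - ε₀) (cl F) (cl E) := by
      rcases hH ε₀ hε₀pos hε₀1 with ⟨_, hss⟩ | ⟨hnz, _⟩
      · exact hss F (g ≫ φ) hmono' hF hne'
      · exact absurd hz hnz
    simp only [slopeLT, slopeLE] at hup hdn ⊢
    rw [hclQ]
    linarith
  · -- E' nonzero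
    have hfh : f ≫ (cokernel.π f ≫ cokernel.π g) = 0 := by
      rw [← Category.assoc, cokernel.condition, zero_comp]
    set h0 : E ⟶ cokernel g := cokernel.π f ≫ cokernel.π g with hh0def
    haveI hepi : Epi h0 := epi_comp _ _
    set G := kernel h0 with hGdef
    set ι : G ⟶ E := kernel.ι h0 with hιdef
    haveI hιmono : Mono ι := inferInstance
    have hf'ι : kernel.lift h0 f hfh ≫ ι = f := kernel.lift_ι _ _ _
    have hGnz : ¬ IsZero G := by
      intro hzG
      refine hz (IsZero.of_mono_eq_zero f ?_)
      rw [← hf'ι, hzG.eq_zero_of_tgt (kernel.lift h0 f hfh), zero_comp]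
    have hιne : ¬ IsIso ι := by
      intro hi
      haveI := hi
      have h00 : h0 = 0 := by
        rw [← Category.id_comp h0, ← IsIso.inv_hom_id ι, Category.assoc,
          kernel.condition, comp_zero]
      have hK0 : IsZero (cokernel g) := IsZero.of_epi_eq_zero h0 h00
      haveI := Preadditive.epi_of_isZero_cokernel g hK0
      exact hgiso (isIso_of_mono_of_epi g)
    have hQnz : ¬ IsZero (cokernel f) := by
      intro hzQ
      exact hF (IsZero.of_mono_eq_zero g (hzQ.eq_zero_of_tgt g))
    have hKnz : ¬ IsZero (cokernel g) := by
      intro hzK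
      haveI := Preadditive.epi_of_isZero_cokernel g hzK
      exact hgiso (isIso_of_mono_of_epi g)
    -- classes
    have c2 : cl E = cl E' + cl (cokernel f) := clcoker _ _ f hf
    have c3 : cl (cokernel f) = cl F + cl (cokernel g) := clcoker _ _ g hg
    have c1 : cl E = cl G + cl (cokernel g) :=
      hses (ShortComplex.mk ι h0 (kernel.condition h0))
        (ShortComplex.ShortExact.mk' (ShortComplex.exact_kernel h0) inferInstance hepi)
    have cG : cl G = cl E' + cl F := by
      have h' : cl G + cl (cokernel g) = (cl E' + cl F) + cl (cokernel g) := by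
        rw [← c1, c2, c3]; abel
      exact add_right_cancel h'
    -- positivity facts
    obtain ⟨hr1, hv1, himp1⟩ := hpos E' hz
    obtain ⟨hr2, hv2, himp2⟩ := hpos F hF
    obtain ⟨hrQ, hvQ, himpQ⟩ := hpos _ hQnz
    obtain ⟨hrK, hvK, himpK⟩ := hpos _ hKnz
    -- right branch of HN
    have hHr : ∀ ε : ℝ, 0 < ε → ε < δ₁ →
        IsSemistableAt cl d r v (c - ε) (cokernel f) ∧
        slopeLT d r v (c - ε) (cl (cokernel f)) (cl E') := by
      intro ε a b
      rcases hH ε a b with ⟨h1, _⟩ | ⟨_, _, h3, h4⟩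
      · exact absurd h1 hz
      · exact ⟨h3, h4⟩
    -- limiting inequalities at c
    have HAF : (d (cl F) + c * (v (cl F) : ℝ)) * r (cl (cokernel f))
        - (d (cl (cokernel f)) + c * (v (cl (cokernel f)) : ℝ)) * r (cl F) ≤ 0 := by
      apply aux_nonpos' hδ₁
        (B := (v (cl (cokernel f)) : ℝ) * r (cl F) - (v (cl F) : ℝ) * r (cl (cokernel f)))
      intro ε a b
      have hM := (hHr ε a b).1 F g hg hF hgiso
      simp only [slopeLE] at hM
      linarith
    have HA4 : (d (cl (cokernel f)) + c * (v (cl (cokernel f)) : ℝ)) * r (cl E')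
        - (d (cl E') + c * (v (cl E') : ℝ)) * r (cl (cokernel f)) ≤ 0 := by
      apply aux_nonpos' hδ₁
        (B := (v (cl E') : ℝ) * r (cl (cokernel f)) - (v (cl (cokernel f)) : ℝ) * r (cl E'))
      intro ε a b
      have hM := (hHr ε a b).2
      simp only [slopeLT] at hM
      linarith
    have S1 := hsst E' f hf hz hne
    have M3 := (hHr ε₀ hε₀pos hε₀1).1 F g hg hF hgiso
    have M4 := (hHr ε₀ hε₀pos hε₀1).2
    have P2 := hP ε₀ hε₀pos hε₀2 G ι hιmono hGnz hιne
    simp only [slopeLE, slopeLT] at S1 M3 M4 P2 ⊢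
    -- integer bookkeeping
    have hZ : v (cl E') + (v (cl F) + v (cl (cokernel g))) = 1 := by
      rw [← map_add, ← map_add, ← c3, ← c2, hvE]
    -- rewrite everything in the base {E', F, cokernel g}
    by_contra hcon
    push_neg at hcon
    simp only [c2, c3, cG, map_add, Int.cast_add] at S1 M3 M4 P2 HAF HA4 hcon
    have AF0 : (d (cl F) + c * (v (cl F) : ℝ)) * (r (cl F) + r (cl (cokernel g)))
        = (d (cl F) + d (cl (cokernel g))
            + c * ((v (cl F) : ℝ) + (v (cl (cokernel g)) : ℝ))) * r (cl F) := by
      linarith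
    have A40 : (d (cl F) + d (cl (cokernel g))
            + c * ((v (cl F) : ℝ) + (v (cl (cokernel g)) : ℝ))) * r (cl E')
        = (d (cl E') + c * (v (cl E') : ℝ)) * (r (cl F) + r (cl (cokernel g))) := by
      linarith
    have hB4 : 0 < ((v (cl F) : ℝ) + (v (cl (cokernel g)) : ℝ)) * r (cl E')
        - (v (cl E') : ℝ) * (r (cl F) + r (cl (cokernel g))) := by
      by_contra hb
      push_neg at hb
      have hx : 0 ≤ ε₀ * ((v (cl E') : ℝ) * (r (cl F) + r (cl (cokernel g)))
          - ((v (cl F) : ℝ) + (v (cl (cokernel g)) : ℝ)) * r (cl E')) :=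
        mul_nonneg hε₀pos.le (by linarith)
      nlinarith [M4, A40, hx]
    have hrQpos : 0 < r (cl F) + r (cl (cokernel g)) := by
      have e : r (cl (cokernel f)) = r (cl F) + r (cl (cokernel g)) := by rw [c3, map_add]
      rcases eq_or_lt_of_le hrQ with he | hl
      · exfalso
        obtain ⟨_, hv0⟩ := himpQ he.symm
        have ev : v (cl (cokernel f)) = v (cl F) + v (cl (cokernel g)) := by rw [c3, map_add]
        have h2' : v (cl F) = 0 ∧ v (cl (cokernel g)) = 0 := by omega
        rw [h2'.1, h2'.2] at hB4
        have he' : r (cl F) + r (cl (cokernel g)) = 0 := by rw [← e, ← he]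
        rw [he'] at hB4
        push_cast at hB4
        linarith
      · rw [e] at hl; exact hl
    -- A_G = 0
    have key : ((d (cl E') + d (cl F) + c * ((v (cl E') : ℝ) + (v (cl F) : ℝ)))
          * (r (cl E') + (r (cl F) + r (cl (cokernel g))))
        - (d (cl E') + (d (cl F) + d (cl (cokernel g)))
            + c * ((v (cl E') : ℝ) + ((v (cl F) : ℝ) + (v (cl (cokernel g)) : ℝ))))
          * (r (cl E') + r (cl F))) * (r (cl F) + r (cl (cokernel g))) = 0 := by
      linear_combination (r (cl E') + r (cl F) + r (cl (cokernel g))) * AF0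
        - r (cl (cokernel g)) * A40
    have AG0 : (d (cl E') + d (cl F) + c * ((v (cl E') : ℝ) + (v (cl F) : ℝ)))
          * (r (cl E') + (r (cl F) + r (cl (cokernel g))))
        - (d (cl E') + (d (cl F) + d (cl (cokernel g)))
            + c * ((v (cl E') : ℝ) + ((v (cl F) : ℝ) + (v (cl (cokernel g)) : ℝ))))
          * (r (cl E') + r (cl F)) = 0 := by
      rcases mul_eq_zero.mp key with h | h
      · exact h
      · exact absurd h (ne_of_gt hrQpos)
    -- case analysis on the framing ranks
    have hcase :
        (v (cl E') = 1 ∧ v (cl F) = 0 ∧ v (cl (cokernel g)) = 0) ∨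
        (v (cl E') = 0 ∧ v (cl F) = 1 ∧ v (cl (cokernel g)) = 0) ∨
        (v (cl E') = 0 ∧ v (cl F) = 0 ∧ v (cl (cokernel g)) = 1) := by omega
    rcases hcase with ⟨e1, e2, e3⟩ | ⟨e1, e2, e3⟩ | ⟨e1, e2, e3⟩
    · -- v(E') = 1
      rw [e1, e2, e3] at hB4
      push_cast at hB4
      linarith
    · -- v(F) = 1
      rw [e1, e2, e3] at P2 AG0
      push_cast at P2 AG0
      linarith [mul_nonneg hε₀pos.le hrK]
    · -- v(cokernel g) = 1
      rw [e2, e3] at M3 AF0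
      push_cast at M3 AF0
      have h1' : ε₀ * r (cl F) ≤ 0 := by linarith
      have h2' : 0 ≤ ε₀ * r (cl F) := mul_nonneg hε₀pos.le hr2
      have h3' : ε₀ * r (cl F) = 0 := le_antisymm h1' h2'
      have hr20 : r (cl F) = 0 := by
        rcases mul_eq_zero.mp h3' with h | h
        · exact absurd h (ne_of_gt hε₀pos)
        · exact h
      obtain ⟨hd2pos, -⟩ := himp2 hr20
      rw [hr20] at AF0 hrQpos
      linarith [mul_pos hd2pos hrQpos]
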